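/- Let p, q be nonnegative integers with p ≥ 1. Then for all nonnegative integers i, j, A_{p,q}(i,j)/A_{p-1,q}(i,j) ≥ (p+q+j+1)/(p+q+1), where the ratio is taken as a real number. -/
import Mathlib

/-- The generalized Eulerian number `eulerA p q i j` counts the paths in the Euler graph
from `(p, q)` to `(p + i, q + j)`.  It is defined by the initial conditions
`eulerA p q i 0 = (q+1)^i`, `eulerA p q 0 j = (p+1)^j` and the recurrence
`eulerA p q i j = (j+q+1) * eulerA p q (i-1) j + (i+p+1) * eulerA p q i (j-1)`. -/
def eulerA (p q : ℕ) : ℕ → ℕ → ℕ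
  | i, 0 => (q + 1) ^ i
  | 0, j + 1 => (p + 1) ^ (j + 1)
  | i + 1, j + 1 =>
      (j + 1 + q + 1) * eulerA p q i (j + 1) + (i + 1 + p + 1) * eulerA p q (i + 1) j

lemma eulerA_i0 (p q i : ℕ) : eulerA p q i 0 = (q + 1) ^ i := by
  simp [eulerA]

lemma eulerA_0succ (p q j : ℕ) : eulerA p q 0 (j + 1) = (p + 1) ^ (j + 1) := by
  simp [eulerA]

lemma eulerA_succ_succ (p q i j : ℕ) :
    eulerA p q (i + 1) (j + 1) =
      (j + 1 + q + 1) * eulerA p q i (j + 1) + (i + 1 + p + 1) * eulerA p q (i + 1) j := by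
  simp [eulerA]

lemma eulerA_pos (p q : ℕ) : ∀ i j, 0 < eulerA p q i j := by
  intro i
  induction i with
  | zero =>
    intro j
    cases j with
    | zero => simp [eulerA_i0]
    | succ j => rw [eulerA_0succ]; positivity
  | succ i ih =>
    intro j
    induction j with
    | zero => rw [eulerA_i0]; positivity
    | succ j ihj =>
      rw [eulerA_succ_succ]
      have h1 := ih (j + 1)
      positivity

/-- The key identity:
`(P+q+2) * A_{P+1,q}(i,j+1) = (P+q+j+3) * A_{P,q}(i,j+1) + (i+1) * A_{P,q}(i+1,j)`. -/
lemma eulerA_key (P q : ℕ) : ∀ i j,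
    (P + q + 2) * eulerA (P + 1) q i (j + 1) =
      (P + q + j + 3) * eulerA P q i (j + 1) + (i + 1) * eulerA P q (i + 1) j := by
  intro i
  induction i with
  | zero =>
    intro j
    induction j with
    | zero =>
      rw [eulerA_0succ, eulerA_0succ, eulerA_i0]
      ring
    | succ j ihj =>
      rw [eulerA_0succ, eulerA_0succ, eulerA_succ_succ, eulerA_0succ]
      rw [eulerA_0succ, eulerA_0succ] at ihj
      zify at ihj ⊢
      linear_combination ((P : ℤ) + 2) * ihj
  | succ i ih =>
    intro j
    induction j with
    | zero =>
      have h0 := ih 0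
      rw [eulerA_i0] at h0
      rw [eulerA_succ_succ, eulerA_succ_succ, eulerA_i0, eulerA_i0, eulerA_i0]
      zify at h0 ⊢
      linear_combination ((q : ℤ) + 2) * h0
    | succ j ihj =>
      have h1 := ih (j + 1)
      rw [eulerA_succ_succ (P + 1) q i (j + 1), eulerA_succ_succ P q i (j + 1),
        eulerA_succ_succ P q (i + 1) j]
      zify at h1 ihj ⊢
      linear_combination ((j : ℤ) + q + 3) * h1 + ((i : ℤ) + P + 3) * ihj

lemma eulerA_mono (P q i j : ℕ) :
    (P + q + 2 + j) * eulerA P q i j ≤ (P + q + 2) * eulerA (P + 1) q i j := by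
  cases j with
  | zero => simp [eulerA_i0]
  | succ j =>
    rw [eulerA_key P q i j]
    have : P + q + 2 + (j + 1) = P + q + j + 3 := by omega
    rw [this]
    exact Nat.le_add_right _ _

theorem stmt16 (p q : ℕ) (hp : 1 ≤ p) (i j : ℕ) :
    ((p : ℝ) + q + j + 1) / ((p : ℝ) + q + 1) ≤
      (eulerA p q i j : ℝ) / (eulerA (p - 1) q i j) := by
  obtain ⟨P, rfl⟩ : ∃ P, p = P + 1 := ⟨p - 1, (Nat.succ_pred_eq_of_pos hp).symm⟩
  have hP : P + 1 - 1 = P := by omega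
  rw [hP]
  have hBpos : (0 : ℝ) < (eulerA P q i j : ℝ) := by
    exact_mod_cast eulerA_pos P q i j
  push_cast
  have hc : (0 : ℝ) < (P : ℝ) + 1 + q + 1 := by positivity
  rw [div_le_div_iff₀ hc hBpos]
  have h := eulerA_mono P q i j
  have h' : (((P + q + 2 + j : ℕ) : ℝ)) * (eulerA P q i j : ℝ) ≤
      ((P + q + 2 : ℕ) : ℝ) * (eulerA (P + 1) q i j : ℝ) := by exact_mod_cast h
  push_cast at h'
  nlinarith [h']
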